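/- arXiv:2506.11608 — 3 statements merged into one kernel-verified Lean document; each statement's English description precedes it below -/
import Mathlib

section
/- Let P be an n×n real symmetric positive semidefinite matrix, q, x̂ ∈ ℝ^n, A an m×n real matrix, z, y ∈ ℝ^m, σ > 0, and R an m×m diagonal matrix with strictly positive diagonal entries. If (x, ν) satisfies (P + σI)x + Aᵀν = σx̂ − q and Ax − R⁻¹ν = z − R⁻¹y, then x = (P + σI + AᵀRA)⁻¹ (Aᵀ(Rz − y) + σx̂ − q) and Ax = z + R⁻¹(ν − y). -/
open scoped Matrix

/-- The indirect method: if `(x, ν)` solves the symmetric block system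
`(P + σI)x + Aᵀν = σx̂ − q`, `Ax − R⁻¹ν = z − R⁻¹y`, then
`x = (P + σI + AᵀRA)⁻¹ (Aᵀ(Rz − y) + σx̂ − q)` and `Ax = z + R⁻¹(ν − y)`. -/
theorem stmt_6 {n m : ℕ} (P : Matrix (Fin n) (Fin n) ℝ) (q xhat : Fin n → ℝ)
    (A : Matrix (Fin m) (Fin n) ℝ) (z y : Fin m → ℝ) (σ : ℝ) (ρ : Fin m → ℝ)
    (hP : P.PosSemidef) (hσ : 0 < σ) (hρ : ∀ i, 0 < ρ i)
    (x : Fin n → ℝ) (ν : Fin m → ℝ)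
    (h1 : (P + σ • (1 : Matrix (Fin n) (Fin n) ℝ)).mulVec x + Aᵀ.mulVec ν = σ • xhat - q)
    (h2 : A.mulVec x - (Matrix.diagonal fun i => (ρ i)⁻¹).mulVec ν =
      z - (Matrix.diagonal fun i => (ρ i)⁻¹).mulVec y) :
    x = (P + σ • (1 : Matrix (Fin n) (Fin n) ℝ) + Aᵀ * Matrix.diagonal ρ * A)⁻¹.mulVec
        (Aᵀ.mulVec ((Matrix.diagonal ρ).mulVec z - y) + σ • xhat - q) ∧
      A.mulVec x = z + (Matrix.diagonal fun i => (ρ i)⁻¹).mulVec (ν - y) := by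
  set R := Matrix.diagonal ρ with hR
  set Ri := (Matrix.diagonal fun i => (ρ i)⁻¹ : Matrix (Fin m) (Fin m) ℝ) with hRi
  have hRRi : R * Ri = 1 := by
    rw [hR, hRi, Matrix.diagonal_mul_diagonal, ← Matrix.diagonal_one]
    have h : (fun i => ρ i * (ρ i)⁻¹) = fun _ => (1:ℝ) :=
      funext fun i => mul_inv_cancel₀ (hρ i).ne'
    rw [h]
  have hcancel : ∀ v : Fin m → ℝ, R.mulVec (Ri.mulVec v) = v := by
    intro v
    rw [Matrix.mulVec_mulVec, hRRi, Matrix.one_mulVec]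
  -- ν in terms of x
  have hν : ν = R.mulVec (A.mulVec x - z) + y := by
    have : Ri.mulVec ν = A.mulVec x - z + Ri.mulVec y := by
      have := h2
      abel_nf at this ⊢
      linear_combination (norm := abel_nf) -this
    calc ν = R.mulVec (Ri.mulVec ν) := (hcancel ν).symm
    _ = R.mulVec (A.mulVec x - z + Ri.mulVec y) := by rw [this]
    _ = R.mulVec (A.mulVec x - z) + y := by
        rw [Matrix.mulVec_add, hcancel]
  -- the main linear equation
  have hM : (P + σ • (1 : Matrix (Fin n) (Fin n) ℝ) + Aᵀ * R * A).mulVec x =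
      Aᵀ.mulVec (R.mulVec z - y) + σ • xhat - q := by
    have hAx : (Aᵀ * R * A).mulVec x = Aᵀ.mulVec (R.mulVec (A.mulVec x)) := by
      rw [← Matrix.mulVec_mulVec, ← Matrix.mulVec_mulVec]
    have hAν : Aᵀ.mulVec ν = Aᵀ.mulVec (R.mulVec (A.mulVec x))
        - Aᵀ.mulVec (R.mulVec z) + Aᵀ.mulVec y := by
      rw [hν, Matrix.mulVec_add, Matrix.mulVec_sub, Matrix.mulVec_sub]
    have h1' := h1
    rw [hAν] at h1'
    rw [Matrix.add_mulVec, hAx, Matrix.mulVec_sub]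
    linear_combination (norm := abel_nf) h1'
  -- positive definiteness
  have hRpsd : R.PosSemidef := Matrix.posSemidef_diagonal_iff.mpr fun i => (hρ i).le
  have hARA : (Aᵀ * R * A).PosSemidef := by
    have := hRpsd.conjTranspose_mul_mul_same A
    rwa [A.conjTranspose_eq_transpose_of_trivial] at this
  have hσI : (σ • (1 : Matrix (Fin n) (Fin n) ℝ)).PosDef := by
    have : (σ • (1 : Matrix (Fin n) (Fin n) ℝ)) = Matrix.diagonal (fun _ => σ) := by
      ext i j
      by_cases h : i = j <;> simp [Matrix.one_apply, h]
    rw [this]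
    exact Matrix.posDef_diagonal_iff.mpr fun _ => hσ
  have hMpd : (P + σ • (1 : Matrix (Fin n) (Fin n) ℝ) + Aᵀ * R * A).PosDef :=
    (Matrix.PosDef.posSemidef_add hP hσI).add_posSemidef hARA
  constructor
  · have hdet := hMpd.isUnit
    have := Matrix.nonsing_inv_mul _ ((Matrix.isUnit_iff_isUnit_det _).mp hdet)
    calc x = ((P + σ • (1 : Matrix (Fin n) (Fin n) ℝ) + Aᵀ * R * A)⁻¹ *
        (P + σ • (1 : Matrix (Fin n) (Fin n) ℝ) + Aᵀ * R * A)).mulVec x := by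
          rw [this, Matrix.one_mulVec]
    _ = (P + σ • (1 : Matrix (Fin n) (Fin n) ℝ) + Aᵀ * R * A)⁻¹.mulVec
        ((P + σ • (1 : Matrix (Fin n) (Fin n) ℝ) + Aᵀ * R * A).mulVec x) := by
          rw [Matrix.mulVec_mulVec]
    _ = _ := by rw [hM]
  · rw [Matrix.mulVec_sub]
    linear_combination (norm := abel_nf) h2
end

section
/- Let P be an n×n real symmetric positive semidefinite matrix, q ∈ ℝ^n, A an m×n real matrix, and let the bounds be extended reals l, u ∈ (ℝ ∪ {−∞, +∞})^m; call x feasible if l_i ≤ (Ax)_i ≤ u_i for every i. Define f(x) := (1/2)xᵀPx + qᵀx. Suppose δx ∈ ℝ^n satisfies Pδx = 0, qᵀδx < 0, and for each i: (Aδx)_i = 0 whenever l_i and u_i are both finite, (Aδx)_i ≥ 0 whenever u_i = +∞ and l_i is finite, and (Aδx)_i ≤ 0 whenever l_i = −∞ and u_i is finite. Then for every feasible x and every t ≥ 0, x + tδx is feasible and f(x + tδx) = f(x) + t·qᵀδx; consequently f is unbounded below on the feasible set whenever it is nonempty. -/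
open scoped Matrix

/-- Dual infeasibility certificate with possibly infinite bounds
`l, u ∈ (ℝ ∪ {−∞, +∞})^m` (modeled as `EReal`): if `Pδx = 0`, `qᵀδx < 0`, and
`(Aδx)_i = 0` when both bounds are finite, `(Aδx)_i ≥ 0` when `u_i = +∞` and `l_i`
is finite, `(Aδx)_i ≤ 0` when `l_i = −∞` and `u_i` is finite, then the ray `x + tδx`
stays feasible with linearly decreasing cost, hence the QP is unbounded below on a
nonempty feasible set. -/
theorem stmt_10 {n m : ℕ} (P : Matrix (Fin n) (Fin n) ℝ) (q : Fin n → ℝ)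
    (A : Matrix (Fin m) (Fin n) ℝ) (l u : Fin m → EReal)
    (hP : P.PosSemidef)
    (f : (Fin n → ℝ) → ℝ)
    (hf : ∀ x, f x = (1 / 2) * (x ⬝ᵥ P.mulVec x) + q ⬝ᵥ x)
    (feasible : (Fin n → ℝ) → Prop)
    (hfeas : ∀ x, feasible x ↔ ∀ i, l i ≤ (A.mulVec x i : EReal) ∧ (A.mulVec x i : EReal) ≤ u i)
    (δx : Fin n → ℝ)
    (hPδ : P.mulVec δx = 0) (hqδ : q ⬝ᵥ δx < 0)
    (hfin : ∀ i, (l i ≠ ⊥ ∧ l i ≠ ⊤) → (u i ≠ ⊥ ∧ u i ≠ ⊤) → A.mulVec δx i = 0)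
    (hup : ∀ i, u i = ⊤ → (l i ≠ ⊥ ∧ l i ≠ ⊤) → 0 ≤ A.mulVec δx i)
    (hlo : ∀ i, l i = ⊥ → (u i ≠ ⊥ ∧ u i ≠ ⊤) → A.mulVec δx i ≤ 0) :
    (∀ x : Fin n → ℝ, feasible x → ∀ t : ℝ, 0 ≤ t →
        feasible (x + t • δx) ∧ f (x + t • δx) = f x + t * (q ⬝ᵥ δx)) ∧
      ((∃ x, feasible x) → ∀ c : ℝ, ∃ x, feasible x ∧ f x < c) := by
  have hsym : Pᵀ = P := by simpa using hP.1.eq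
  have key : ∀ x : Fin n → ℝ, feasible x → ∀ t : ℝ, 0 ≤ t →
      feasible (x + t • δx) ∧ f (x + t • δx) = f x + t * (q ⬝ᵥ δx) := by
    intro x hx t ht
    have hx' := (hfeas x).mp hx
    constructor
    · rw [hfeas]
      intro i
      have hAi : A.mulVec (x + t • δx) i = A.mulVec x i + t * A.mulVec δx i := by
        simp [Matrix.mulVec_add, Matrix.mulVec_smul]
      obtain ⟨hl, hu⟩ := hx' i
      rw [hAi]
      by_cases hlb : l i = ⊥
      · by_cases hub : u i = ⊤
        · simp [hlb, hub]
        · have hub' : u i ≠ ⊥ := by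
            intro h; rw [h] at hu; exact (EReal.coe_ne_bot _) (le_bot_iff.mp hu)
          have hδ := hlo i hlb ⟨hub', hub⟩
          constructor
          · simp [hlb]
          · calc ((A.mulVec x i + t * A.mulVec δx i : ℝ) : EReal)
                ≤ ((A.mulVec x i : ℝ) : EReal) := by
                  exact_mod_cast add_le_of_nonpos_right (mul_nonpos_of_nonneg_of_nonpos ht hδ)
              _ ≤ u i := hu
      · have hlt : l i ≠ ⊤ := by
          intro h; rw [h] at hl; exact (EReal.coe_ne_top _) (top_le_iff.mp hl)
        by_cases hub : u i = ⊤
        · have hδ := hup i hub ⟨hlb, hlt⟩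
          constructor
          · calc l i ≤ ((A.mulVec x i : ℝ) : EReal) := hl
              _ ≤ ((A.mulVec x i + t * A.mulVec δx i : ℝ) : EReal) := by
                  exact_mod_cast le_add_of_nonneg_right (mul_nonneg ht hδ)
          · simp [hub]
        · have hub' : u i ≠ ⊥ := by
            intro h; rw [h] at hu; exact (EReal.coe_ne_bot _) (le_bot_iff.mp hu)
          have hδ := hfin i ⟨hlb, hlt⟩ ⟨hub', hub⟩
          rw [hδ]
          simpa using hx' i
    · have hPd : P.mulVec (x + t • δx) = P.mulVec x := by
        rw [Matrix.mulVec_add, Matrix.mulVec_smul, hPδ]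
        simp
      have hδPx : δx ⬝ᵥ P.mulVec x = 0 := by
        rw [Matrix.dotProduct_mulVec, ← Matrix.mulVec_transpose, hsym, hPδ]
        simp
      rw [hf, hf, hPd, add_dotProduct, smul_dotProduct,
        dotProduct_add, dotProduct_smul, hδPx]
      simp only [smul_eq_mul, mul_zero, add_zero]
      ring
  refine ⟨key, ?_⟩
  rintro ⟨x, hx⟩ c
  set qd := q ⬝ᵥ δx with hqd
  set t : ℝ := max 0 ((c - f x - 1) / qd) with htdef
  have ht0 : 0 ≤ t := le_max_left _ _
  obtain ⟨hfeas', heq⟩ := key x hx t ht0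
  refine ⟨x + t • δx, hfeas', ?_⟩
  have h1 : t * qd ≤ ((c - f x - 1) / qd) * qd :=
    mul_le_mul_of_nonpos_right (le_max_right _ _) (le_of_lt hqδ)
  rw [div_mul_cancel₀ _ (ne_of_lt hqδ)] at h1
  rw [heq]
  linarith
end

section
/- Let P be an n×n real symmetric positive semidefinite matrix, q ∈ ℝ^n, A an m×n real matrix, l, u ∈ ℝ^m with l ≤ u, σ ≥ 0, and R an m×m diagonal matrix with strictly positive diagonal entries. Suppose (x, z, y) ∈ ℝ^n × ℝ^m × ℝ^m is a fixed point of the superADMM iteration, i.e.: 0 = Px + q + Aᵀy + AᵀR(Ax − z) + σ(x − x) (stationarity of the x-update with x^k = x), z = Π_{[l,u]}(Ax + R⁻¹y), and y = y + R(Ax − z). Then Ax = z, l ≤ Ax ≤ u, Px + q + Aᵀy = 0, and x is a global minimizer of (1/2)xᵀPx + qᵀx over {x : l ≤ Ax ≤ u}. -/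
open scoped Matrix

/-- A fixed point `(x, z, y)` of the superADMM iteration (stationarity
of the x-update, projection z-update, and dual update) satisfies `Ax = z`,
`l ≤ Ax ≤ u`, `Px + q + Aᵀy = 0`, and `x` is a global minimizer of the QP. -/
theorem stmt_13 {n m : ℕ} (P : Matrix (Fin n) (Fin n) ℝ) (q : Fin n → ℝ)
    (A : Matrix (Fin m) (Fin n) ℝ) (l u : Fin m → ℝ) (σ : ℝ) (ρ : Fin m → ℝ)
    (hP : P.PosSemidef) (hσ : 0 ≤ σ) (hρ : ∀ i, 0 < ρ i) (hlu : l ≤ u)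
    (x : Fin n → ℝ) (z y : Fin m → ℝ)
    (hstat : 0 = P.mulVec x + q + Aᵀ.mulVec y +
      Aᵀ.mulVec ((Matrix.diagonal ρ).mulVec (A.mulVec x - z)) + σ • (x - x))
    (hzfix : ∀ i, z i = max (l i) (min (u i) (A.mulVec x i + y i / ρ i)))
    (hyfix : y = y + (Matrix.diagonal ρ).mulVec (A.mulVec x - z)) :
    A.mulVec x = z ∧ (l ≤ A.mulVec x ∧ A.mulVec x ≤ u) ∧
      P.mulVec x + q + Aᵀ.mulVec y = 0 ∧
      (∀ x' : Fin n → ℝ, l ≤ A.mulVec x' → A.mulVec x' ≤ u →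
        (1 / 2) * (x ⬝ᵥ P.mulVec x) + q ⬝ᵥ x ≤
          (1 / 2) * (x' ⬝ᵥ P.mulVec x') + q ⬝ᵥ x') := by
  have hR0 : (Matrix.diagonal ρ).mulVec (A.mulVec x - z) = 0 :=
    (left_eq_add.mp hyfix)
  have hAz : A.mulVec x = z := by
    funext i
    have h := congrFun hR0 i
    rw [Matrix.mulVec_diagonal] at h
    have h2 : A.mulVec x i - z i = 0 := by
      rcases mul_eq_zero.mp h with h' | h'
      · exact absurd h' (ne_of_gt (hρ i))
      · simpa using h'
    have := sub_eq_zero.mp h2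
    simpa using this
  have hstat' : P.mulVec x + q + Aᵀ.mulVec y = 0 := by
    have h := hstat
    simp only [hAz, sub_self, Matrix.mulVec_zero, smul_zero, add_zero] at h
    exact h.symm
  have hlz : ∀ i, l i ≤ z i := fun i => by rw [hzfix i]; exact le_max_left _ _
  have hzu : ∀ i, z i ≤ u i := fun i => by
    rw [hzfix i]; exact max_le (hlu i) (min_le_left _ _)
  refine ⟨hAz, ⟨fun i => by rw [hAz]; exact hlz i, fun i => by rw [hAz]; exact hzu i⟩,
    hstat', ?_⟩
  -- complementarity: for any feasible w, y i * (w i - z i) ≤ 0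
  have hcomp : ∀ (w : Fin m → ℝ), l ≤ w → w ≤ u → ∀ i, y i * (w i - z i) ≤ 0 := by
    intro w hlw hwu i
    have hz := hzfix i
    rw [congrFun hAz i] at hz
    have hρi := hρ i
    rcases lt_trichotomy (y i) 0 with hy | hy | hy
    · -- then z i = l i
      have ha : y i / ρ i < 0 := div_neg_of_neg_of_pos hy hρi
      have hmin : min (u i) (z i + y i / ρ i) < z i :=
        lt_of_le_of_lt (min_le_right _ _) (by linarith)
      have hzl : z i = l i := by
        rcases max_cases (l i) (min (u i) (z i + y i / ρ i)) with ⟨he, h2⟩ | ⟨he, h2⟩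
        · exact hz.trans he
        · exfalso; have := hz.trans he; linarith
      rw [hzl]
      have h1 : 0 ≤ w i - l i := by linarith [hlw i]
      nlinarith
    · simp [hy]
    · -- then z i = u i
      have ha : 0 < y i / ρ i := div_pos hy hρi
      have hminle : min (u i) (z i + y i / ρ i) ≤ z i := by
        conv_rhs => rw [hz]
        exact le_max_right _ _
      have hzu' : z i = u i := by
        rcases min_cases (u i) (z i + y i / ρ i) with ⟨he, h2⟩ | ⟨he, h2⟩
        · rw [he] at hminle; exact le_antisymm (hzu i) hminle
        · exfalso; rw [he] at hminle; linarith
      rw [hzu']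
      have h1 : w i - u i ≤ 0 := by linarith [hwu i]
      nlinarith
  intro x' hl' hu'
  set d : Fin n → ℝ := x' - x with hd
  have hpsd : 0 ≤ d ⬝ᵥ P.mulVec d := by have := hP.dotProduct_mulVec_nonneg d; simpa using this
  have hPsymm : Pᵀ = P := hP.1
  have hvm : x ᵥ* P = P *ᵥ x := by rw [← Matrix.mulVec_transpose, hPsymm]
  have hsym : x ⬝ᵥ P.mulVec x' = x' ⬝ᵥ P.mulVec x := by
    rw [Matrix.dotProduct_mulVec, hvm, dotProduct_comm]
  have hgrad : d ⬝ᵥ (P.mulVec x + q + Aᵀ.mulVec y) = 0 := by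
    rw [hstat']; simp
  have hAd : d ⬝ᵥ Aᵀ.mulVec y = (A.mulVec x' - z) ⬝ᵥ y := by
    rw [Matrix.dotProduct_mulVec, Matrix.vecMul_transpose, hd, Matrix.mulVec_sub, hAz]
  have hkey : (A.mulVec x' - z) ⬝ᵥ y ≤ 0 := by
    rw [dotProduct]
    apply Finset.sum_nonpos
    intro i _
    have := hcomp (A.mulVec x') hl' hu' i
    simp only [Pi.sub_apply]
    nlinarith
  -- expand everything
  have e1 : d ⬝ᵥ P.mulVec d =
      x' ⬝ᵥ P.mulVec x' - x' ⬝ᵥ P.mulVec x - x ⬝ᵥ P.mulVec x' + x ⬝ᵥ P.mulVec x := by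
    rw [hd, Matrix.mulVec_sub, sub_dotProduct, dotProduct_sub,
      dotProduct_sub]
    ring
  have e2 : d ⬝ᵥ P.mulVec x = x' ⬝ᵥ P.mulVec x - x ⬝ᵥ P.mulVec x := by
    rw [hd, sub_dotProduct]
  have e3 : d ⬝ᵥ q = q ⬝ᵥ x' - q ⬝ᵥ x := by
    rw [hd, sub_dotProduct, dotProduct_comm, dotProduct_comm x q]
  have hgrad' : d ⬝ᵥ P.mulVec x + d ⬝ᵥ q + d ⬝ᵥ Aᵀ.mulVec y = 0 := by
    rw [← dotProduct_add, ← dotProduct_add]; exact hgrad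
  rw [hAd] at hgrad'
  rw [hsym] at e1
  linarith [hgrad', e1, e2, e3, hpsd, hkey]
end
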